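/- Let L be a 7-dimensional nilpotent Lie algebra of nilpotency class two over a field, containing a central element x₇, with basis x₁, ..., x₇ and brackets [x₁,x₂] = x₄ + α₁x₇, [x₁,x₃] = x₅ + α₂x₇, [x₂,x₃] = x₆ + α₆x₇, [xᵢ,xⱼ] = αᵢⱼ x₇ for the remaining pairs (with all αᵢⱼ forced to be 0 by the class-two condition since x₄, x₅, x₆ ∈ L²). Then L is isomorphic to L_{6,26} ⊕ A(1), where L_{6,26} is the 6-dimensional Lie algebra with nonzero brackets [x₁,x₂] = x₄, [x₁,x₃] = x₅, [x₂,x₃] = x₆. -/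

import Mathlib

/-- The Lie algebra `L_{6,26} ⊕ A(1)` (free nilpotent of class 2 on 3 generators, plus a
1-dimensional abelian summand): carrier `(Fin 3 → K) × (Fin 3 → K) × K`, where the first
factor is spanned by the generators `x₁,x₂,x₃`, the second by `x₄,x₅,x₆` (the centre of
`L_{6,26}`), and the last coordinate is the abelian summand `A(1)`. -/
abbrev L626A1 (K : Type*) : Type _ := (Fin 3 → K) × (Fin 3 → K) × K

namespace L626A1

variable {K : Type*} [Field K]

def idx1 : Fin 3 → Fin 3 := ![0, 0, 1]
def idx2 : Fin 3 → Fin 3 := ![1, 2, 2]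

/-- The component form of the bracket: `[x₁,x₂]=x₄`, `[x₁,x₃]=x₅`, `[x₂,x₃]=x₆`. -/
def B (a b : Fin 3 → K) : Fin 3 → K :=
  fun i => a (idx1 i) * b (idx2 i) - a (idx2 i) * b (idx1 i)

lemma B_add_left (a a' c : Fin 3 → K) : B (K := K) (a + a') c = B a c + B a' c := by
  funext i; simp only [B, Pi.add_apply]; ring

lemma B_add_right (a c c' : Fin 3 → K) : B (K := K) a (c + c') = B a c + B a c' := by
  funext i; simp only [B, Pi.add_apply]; ring

lemma B_smul_right (t : K) (a c : Fin 3 → K) : B (K := K) a (t • c) = t • B a c := by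
  funext i; simp only [B, Pi.smul_apply, smul_eq_mul]; ring

lemma B_self (a : Fin 3 → K) : B (K := K) a a = 0 := by
  funext i; simp only [B, Pi.zero_apply]; ring

lemma B_zero_left (c : Fin 3 → K) : B (K := K) 0 c = 0 := by
  funext i; simp [B]

lemma B_zero_right (a : Fin 3 → K) : B (K := K) a 0 = 0 := by
  funext i; simp [B]

/-- The bracket on `L_{6,26} ⊕ A(1)`. -/
def brkt (x y : L626A1 K) : L626A1 K := (0, B x.1 y.1, 0)

instance : LieRing (L626A1 K) :=
  { (inferInstance : AddCommGroup (L626A1 K)) with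
    bracket := brkt
    add_lie := fun x y z => by
      show brkt (x + y) z = brkt x z + brkt y z
      simp [brkt, Prod.ext_iff, B_add_left]
    lie_add := fun x y z => by
      show brkt x (y + z) = brkt x y + brkt x z
      simp [brkt, Prod.ext_iff, B_add_right]
    lie_self := fun x => by
      show brkt x x = 0
      simp [brkt, Prod.ext_iff, B_self]
    leibniz_lie := fun x y z => by
      show brkt x (brkt y z) = brkt (brkt x y) z + brkt y (brkt x z)
      simp [brkt, Prod.ext_iff, B_zero_left, B_zero_right] }

instance : LieAlgebra K (L626A1 K) :=
  { (inferInstance : Module K (L626A1 K)) with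
    lie_smul := fun t x y => by
      show brkt x (t • y) = t • brkt x y
      simp [brkt, Prod.ext_iff, B_smul_right] }

end L626A1

section Aux

variable {K : Type*} [Field K] {L : Type*} [LieRing L] [LieAlgebra K L]

/-- Images of the basis vectors of `L` in `L626A1 K`. -/
def tv (α₁ α₂ α₆ : K) : Fin 7 → L626A1 K :=
  ![(![1,0,0], 0, 0), (![0,1,0], 0, 0), (![0,0,1], 0, 0),
    (0, ![1,0,0], -α₁), (0, ![0,1,0], -α₂), (0, ![0,0,1], -α₆), (0, 0, 1)]

/-- Explicit inverse linear map. -/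
noncomputable def psiMap (b : Module.Basis (Fin 7) K L) (α₁ α₂ α₆ : K) : L626A1 K →ₗ[K] L where
  toFun p := p.1 0 • b 0 + p.1 1 • b 1 + p.1 2 • b 2 + p.2.1 0 • b 3 + p.2.1 1 • b 4
      + p.2.1 2 • b 5 + (p.2.2 + α₁ * p.2.1 0 + α₂ * p.2.1 1 + α₆ * p.2.1 2) • b 6
  map_add' p q := by
    simp only [Prod.fst_add, Prod.snd_add, Pi.add_apply]
    module
  map_smul' t p := by
    simp only [Prod.smul_fst, Prod.smul_snd, Pi.smul_apply, smul_eq_mul, RingHom.id_apply]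
    module

lemma tv_0 (α₁ α₂ α₆ : K) : tv (K := K) α₁ α₂ α₆ 0 = (![1,0,0], 0, 0) := rfl
lemma tv_1 (α₁ α₂ α₆ : K) : tv (K := K) α₁ α₂ α₆ 1 = (![0,1,0], 0, 0) := rfl
lemma tv_2 (α₁ α₂ α₆ : K) : tv (K := K) α₁ α₂ α₆ 2 = (![0,0,1], 0, 0) := rfl
lemma tv_3 (α₁ α₂ α₆ : K) : tv (K := K) α₁ α₂ α₆ 3 = (0, ![1,0,0], -α₁) := rfl
lemma tv_4 (α₁ α₂ α₆ : K) : tv (K := K) α₁ α₂ α₆ 4 = (0, ![0,1,0], -α₂) := rfl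
lemma tv_5 (α₁ α₂ α₆ : K) : tv (K := K) α₁ α₂ α₆ 5 = (0, ![0,0,1], -α₆) := rfl
lemma tv_6 (α₁ α₂ α₆ : K) : tv (K := K) α₁ α₂ α₆ 6 = (0, 0, 1) := rfl

end Aux

/-- a 7-dimensional nilpotent Lie algebra of class two with a central element
`x₇` and brackets `[x₁,x₂]=x₄+α₁x₇`, `[x₁,x₃]=x₅+α₂x₇`, `[x₂,x₃]=x₆+α₆x₇`, all remaining
brackets of basis vectors being zero, is isomorphic to `L_{6,26} ⊕ A(1)`. -/
theorem stmt_5 (K : Type*) [Field K] (L : Type*) [LieRing L] [LieAlgebra K L]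
    (b : Module.Basis (Fin 7) K L) (α₁ α₂ α₆ : K)
    (hclass2 : LieModule.lowerCentralSeries K L L 2 = ⊥)
    (hcent : b 6 ∈ LieAlgebra.center K L)
    (h12 : ⁅b 0, b 1⁆ = b 3 + α₁ • b 6)
    (h13 : ⁅b 0, b 2⁆ = b 4 + α₂ • b 6)
    (h23 : ⁅b 1, b 2⁆ = b 5 + α₆ • b 6)
    (hzero : ∀ i j : Fin 7,
      (i, j) ∉ ({(0,1),(1,0),(0,2),(2,0),(1,2),(2,1)} : Set (Fin 7 × Fin 7)) →
      ⁅b i, b j⁆ = 0) :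
    Nonempty (L ≃ₗ⁅K⁆ L626A1 K) := by
  classical
  set v : Fin 7 → L626A1 K := tv α₁ α₂ α₆ with hv
  set φ : L →ₗ[K] L626A1 K := b.constr K v with hφ
  have hφb : ∀ i, φ (b i) = v i := fun i => b.constr_basis K v i
  have lie_def : ∀ x y : L626A1 K, ⁅x, y⁆ = L626A1.brkt x y := fun _ _ => rfl
  have h21 : ⁅b 1, b 0⁆ = -(b 3 + α₁ • b 6) := by rw [← lie_skew, h12]
  have h31 : ⁅b 2, b 0⁆ = -(b 4 + α₂ • b 6) := by rw [← lie_skew, h13]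
  have h32 : ⁅b 2, b 1⁆ = -(b 5 + α₆ • b 6) := by rw [← lie_skew, h23]
  have hbr : ∀ i j : Fin 7, φ ⁅b i, b j⁆ = ⁅φ (b i), φ (b j)⁆ := by
    intro i j
    fin_cases i <;> fin_cases j <;>
      simp only [Fin.zero_eta, Fin.mk_one, Fin.reduceFinMk, Fin.isValue] <;>
      (first
        | rw [h12] | rw [h13] | rw [h23] | rw [h21] | rw [h31] | rw [h32]
        | rw [hzero _ _ (by decide)]) <;>
      simp [hφb, hv, tv_0, tv_1, tv_2, tv_3, tv_4, tv_5, tv_6, lie_def,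
        L626A1.brkt, L626A1.B, L626A1.idx1, L626A1.idx2,
        Prod.ext_iff, funext_iff, Fin.forall_fin_succ, Matrix.cons_val_zero,
        Matrix.cons_val_one, Matrix.cons_val_succ, Matrix.head_cons, Matrix.tail_cons]
  have step1 : ∀ (i : Fin 7) (y : L), φ ⁅b i, y⁆ = ⁅φ (b i), φ y⁆ := by
    intro i
    have heq : (φ ∘ₗ LieAlgebra.ad K L (b i) : L →ₗ[K] L626A1 K)
        = (LieAlgebra.ad K (L626A1 K) (φ (b i))).comp φ :=
      b.ext fun j => by simpa [LieAlgebra.ad_apply] using hbr i j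
    intro y
    simpa [LieAlgebra.ad_apply] using LinearMap.congr_fun heq y
  have map_lie : ∀ x y : L, φ ⁅x, y⁆ = ⁅φ x, φ y⁆ := by
    intro x y
    have h1 : ∀ j : Fin 7, φ ⁅x, b j⁆ = ⁅φ x, φ (b j)⁆ := by
      intro j
      rw [← lie_skew, ← lie_skew (φ x), map_neg, step1 j x]
    have heq : (φ ∘ₗ LieAlgebra.ad K L x : L →ₗ[K] L626A1 K)
        = (LieAlgebra.ad K (L626A1 K) (φ x)).comp φ :=
      b.ext fun j => by simpa [LieAlgebra.ad_apply] using h1 j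
    simpa [LieAlgebra.ad_apply] using LinearMap.congr_fun heq y
  set ψ : L626A1 K →ₗ[K] L := psiMap b α₁ α₂ α₆ with hψ
  have h1 : ψ.comp φ = LinearMap.id := by
    apply b.ext
    intro i
    rw [LinearMap.comp_apply, LinearMap.id_apply, hφb]
    fin_cases i <;>
      simp only [Fin.zero_eta, Fin.mk_one, Fin.reduceFinMk, Fin.isValue, hv, hψ,
        tv_0, tv_1, tv_2, tv_3, tv_4, tv_5, tv_6, psiMap, LinearMap.coe_mk, AddHom.coe_mk,
        Matrix.cons_val_zero, Matrix.cons_val_one, Matrix.cons_val_two, Matrix.head_cons,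
        Matrix.tail_cons, Pi.zero_apply] <;>
      module
  have h2 : φ.comp ψ = LinearMap.id := by
    apply LinearMap.ext
    intro p
    simp only [LinearMap.comp_apply, hψ, psiMap, LinearMap.coe_mk, AddHom.coe_mk,
      LinearMap.id_apply, map_add, map_smul, hφb]
    simp only [hv, tv_0, tv_1, tv_2, tv_3, tv_4, tv_5, tv_6]
    refine Prod.ext ?_ (Prod.ext ?_ ?_) <;>
      simp only [Prod.fst_add, Prod.snd_add, Prod.smul_fst, Prod.smul_snd,
        smul_zero, add_zero, zero_add, smul_eq_mul]
    · funext k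
      fin_cases k <;>
        simp [Pi.add_apply, Pi.smul_apply, smul_eq_mul] <;> ring
    · funext k
      fin_cases k <;>
        simp [Pi.add_apply, Pi.smul_apply, smul_eq_mul] <;> ring
    · ring
  let e : L ≃ₗ[K] L626A1 K := LinearEquiv.ofLinear φ ψ h2 h1
  exact ⟨{ e with map_lie' := by intro x y; exact map_lie x y }⟩
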